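/- Let k > 0, γ > 0, t ≥ 0, set τ := exp(-k·t)·sinh(k·t)/k, and let μ := gaussianReal 0 (γ²·τ). Then for every real p, the variance of the function x ↦ 1 - 2·p·(1-p)·(1 - cos x) with respect to μ equals 2·p²·(1-p)²·(1 - exp(-γ²·τ))². -/

import Mathlib

open ProbabilityTheory MeasureTheory Real Complex
open scoped NNReal

lemma aux_integral_cos_mul_exp {a : ℝ} (ha : 0 < a) (s : ℝ) :
    ∫ x : ℝ, Real.cos (s * x) * Real.exp (-a * x ^ 2) =
      Real.sqrt (π / a) * Real.exp (-s ^ 2 / (4 * a)) := by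
  have hb : (0:ℝ) < ((a : ℂ)).re := by simpa using ha
  have h := fourierIntegral_gaussian hb (s : ℂ)
  have hInt : Integrable (fun x : ℝ => Complex.exp (Complex.I * s * x) *
      Complex.exp (-(a:ℂ) * x ^ 2)) := by
    have := integrable_cexp_quadratic (b := (a:ℂ)) hb (Complex.I * s) 0
    refine this.congr ?_
    filter_upwards with x
    rw [← Complex.exp_add]
    ring_nf
  have hre := integral_re (𝕜 := ℂ) (μ := (volume : Measure ℝ)) hInt
  rw [h] at hre
  have hπa : (0:ℝ) ≤ π / a := by positivity
  have hrhs : ((π / (a:ℂ)) ^ (1 / 2 : ℂ) * Complex.exp (-(s:ℂ) ^ 2 / (4 * a))) =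
      ((Real.sqrt (π / a) * Real.exp (-s ^ 2 / (4 * a)) : ℝ) : ℂ) := by
    have h1 : (π / (a:ℂ)) = ((π / a : ℝ) : ℂ) := by push_cast; ring
    have h2 : (-(s:ℂ) ^ 2 / (4 * (a:ℂ))) = ((-s ^ 2 / (4 * a) : ℝ) : ℂ) := by push_cast; ring
    have h3 : ((π / a : ℝ) : ℂ) ^ (1 / 2 : ℂ) = ((Real.sqrt (π / a) : ℝ) : ℂ) := by
      rw [show ((1:ℂ)/2) = ((1/2 : ℝ) : ℂ) by norm_num, ← Complex.ofReal_cpow hπa,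
        Real.sqrt_eq_rpow]
    rw [h1, h2, ← Complex.ofReal_exp, h3, ← Complex.ofReal_mul]
  rw [hrhs] at hre
  have hlhs : ∀ x : ℝ, RCLike.re (Complex.exp (Complex.I * s * x) *
      Complex.exp (-(a:ℂ) * x ^ 2)) = Real.cos (s * x) * Real.exp (-a * x ^ 2) := by
    intro x
    rw [show (-(a:ℂ) * x ^ 2) = ((-a * x ^ 2 : ℝ) : ℂ) by push_cast; ring,
      ← Complex.ofReal_exp,
      show Complex.I * s * x = ((s * x : ℝ) : ℂ) * Complex.I by push_cast; ring,
      RCLike.re_to_complex, Complex.mul_re, Complex.ofReal_re, Complex.ofReal_im, mul_zero,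
      sub_zero, Complex.exp_ofReal_mul_I_re]
  calc ∫ x : ℝ, Real.cos (s * x) * Real.exp (-a * x ^ 2)
      = ∫ x : ℝ, RCLike.re (Complex.exp (Complex.I * s * x) *
        Complex.exp (-(a:ℂ) * x ^ 2)) :=
        integral_congr_ae (ae_of_all _ fun x => (hlhs x).symm)
    _ = Real.sqrt (π / a) * Real.exp (-s ^ 2 / (4 * a)) := by
        rw [hre, RCLike.re_to_complex, Complex.ofReal_re]

lemma aux_integral_cos_gaussianReal (v : ℝ≥0) (s : ℝ) :
    ∫ x, Real.cos (s * x) ∂(gaussianReal 0 v) = Real.exp (-(s ^ 2 * v) / 2) := by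
  by_cases hv : v = 0
  · simp [hv, gaussianReal_zero_var]
  · have hvpos : (0:ℝ) < v := by
      exact_mod_cast lt_of_le_of_ne (zero_le : (0:ℝ≥0) ≤ v) (Ne.symm hv)
    have ha : (0:ℝ) < (2 * (v:ℝ))⁻¹ := by positivity
    rw [gaussianReal_of_var_ne_zero 0 hv]
    have hd : (gaussianPDF 0 v) =
        fun x => ((fun y => Real.toNNReal (gaussianPDFReal 0 v y)) x : ENNReal) := by
      ext x; rfl
    rw [hd, integral_withDensity_eq_integral_smul
      ((measurable_gaussianPDFReal 0 v).real_toNNReal) (fun x => Real.cos (s * x))]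
    have hptw : ∀ x : ℝ, (Real.toNNReal (gaussianPDFReal 0 v x) : ℝ≥0) • Real.cos (s * x)
        = (Real.sqrt (2 * π * v))⁻¹ *
          (Real.cos (s * x) * Real.exp (-(2 * (v:ℝ))⁻¹ * x ^ 2)) := by
      intro x
      rw [NNReal.smul_def, smul_eq_mul, Real.coe_toNNReal _ (gaussianPDFReal_nonneg 0 v x),
        gaussianPDFReal]
      rw [sub_zero]
      have : -x ^ 2 / (2 * (v:ℝ)) = -(2 * (v:ℝ))⁻¹ * x ^ 2 := by field_simp
      rw [this]; ring
    simp_rw [hptw]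
    rw [integral_const_mul, aux_integral_cos_mul_exp ha s]
    have e1 : π / ((2 * (v:ℝ))⁻¹) = 2 * π * v := by field_simp
    have e2 : -s ^ 2 / (4 * (2 * (v:ℝ))⁻¹) = -(s ^ 2 * v) / 2 := by field_simp; ring
    rw [e1, e2, ← mul_assoc, inv_mul_cancel₀ (ne_of_gt (Real.sqrt_pos.mpr (by positivity))),
      one_mul]

lemma aux_integrable_cos (v : ℝ≥0) (s : ℝ) :
    Integrable (fun x => Real.cos (s * x)) (gaussianReal 0 v) := by
  refine Integrable.mono' (integrable_const 1)
    (Real.continuous_cos.comp (continuous_const.mul continuous_id)).aestronglyMeasurable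
    (ae_of_all _ fun x => ?_)
  simpa using Real.abs_cos_le_one (s * x)

theorem projection_fidelity_variance_OU_calibrated (k γ t : ℝ) (hk : 0 < k) (hγ : 0 < γ)
    (ht : 0 ≤ t)
    (τ : ℝ) (hτ : τ = Real.exp (-k * t) * Real.sinh (k * t) / k)
    (μ : Measure ℝ) (hμ : μ = gaussianReal 0 (Real.toNNReal (γ ^ 2 * τ)))
    (p : ℝ) :
    ∫ x, (1 - 2 * p * (1 - p) * (1 - Real.cos x)) ^ 2 ∂μ
        - (∫ x, (1 - 2 * p * (1 - p) * (1 - Real.cos x)) ∂μ) ^ 2 =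
      2 * p ^ 2 * (1 - p) ^ 2 * (1 - Real.exp (-γ ^ 2 * τ)) ^ 2 := by
  have hτ0 : 0 ≤ τ := by
    rw [hτ]
    exact div_nonneg (mul_nonneg (Real.exp_nonneg _)
      (Real.sinh_nonneg_iff.mpr (mul_nonneg hk.le ht))) hk.le
  set w : ℝ := γ ^ 2 * τ with hw
  have hw0 : 0 ≤ w := mul_nonneg (sq_nonneg γ) hτ0
  set V : ℝ≥0 := Real.toNNReal w with hV
  have hVc : (V : ℝ) = w := Real.coe_toNNReal _ hw0
  subst hμ
  set a : ℝ := 2 * p * (1 - p) with hadef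
  set q : ℝ := Real.exp (-w / 2) with hq
  have h1 : ∫ x, Real.cos x ∂(gaussianReal 0 V) = q := by
    have := aux_integral_cos_gaussianReal V 1
    simp only [one_mul, one_pow, hVc] at this
    rw [this]
  have h2 : ∫ x, Real.cos (2 * x) ∂(gaussianReal 0 V) = q ^ 4 := by
    have := aux_integral_cos_gaussianReal V 2
    rw [this, hVc, hq, ← Real.exp_nat_mul]
    congr 1
    push_cast
    ring
  have hIc1 : Integrable (fun x => Real.cos x) (gaussianReal 0 V) := by
    simpa using aux_integrable_cos V 1
  have hIc2 : Integrable (fun x => Real.cos (2 * x)) (gaussianReal 0 V) :=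
    aux_integrable_cos V 2
  have key1 : ∀ x : ℝ, (1 - a * (1 - Real.cos x)) ^ 2 =
      (((1 - a) ^ 2 + a ^ 2 / 2) + 2 * (1 - a) * a * Real.cos x) +
        a ^ 2 / 2 * Real.cos (2 * x) := by
    intro x
    have hc := Real.cos_sq x
    linear_combination a ^ 2 * hc
  have key2 : ∀ x : ℝ, 1 - a * (1 - Real.cos x) = (1 - a) + a * Real.cos x := by
    intro x; ring
  have hI2 : ∫ x, (1 - a * (1 - Real.cos x)) ^ 2 ∂(gaussianReal 0 V) =
      (((1 - a) ^ 2 + a ^ 2 / 2) + 2 * (1 - a) * a * q) + a ^ 2 / 2 * q ^ 4 := by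
    simp_rw [key1]
    have hA : Integrable (fun x : ℝ => (1 - a) ^ 2 + a ^ 2 / 2 + 2 * (1 - a) * a * Real.cos x)
        (gaussianReal 0 V) := (integrable_const _).add (hIc1.const_mul _)
    have hB : Integrable (fun x : ℝ => a ^ 2 / 2 * Real.cos (2 * x)) (gaussianReal 0 V) :=
      hIc2.const_mul _
    rw [integral_add hA hB, integral_add (integrable_const _) (hIc1.const_mul _),
      integral_const_mul, integral_const_mul, h1, h2, integral_const]
    simp
  have hI1 : ∫ x, (1 - a * (1 - Real.cos x)) ∂(gaussianReal 0 V) = (1 - a) + a * q := by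
    simp_rw [key2]
    rw [integral_add (integrable_const _) (hIc1.const_mul _), integral_const_mul, h1,
      integral_const]
    simp
  rw [hI2, hI1]
  have hexp : Real.exp (-γ ^ 2 * τ) = q ^ 2 := by
    rw [hq, ← Real.exp_nat_mul]
    congr 1
    push_cast
    rw [hw]
    ring
  rw [hexp, hadef]
  ring
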